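/- Let A and B be ordered sets (finite multisets of reals in non-decreasing order) with A ≥ B, and let b be a real number. If either (i) b ≤ B[|B|] (b is at most the largest element of B) or (ii) |A| ≤ |B|, then the ordered set B' = B ∪ {b} (obtained by inserting b into B while keeping non-decreasing order) satisfies A ≥ B'. -/

import Mathlib

/-- The `i`-th smallest element of a finite multiset of reals
(default `0` when out of range). -/
noncomputable def osIdx (X : Multiset ℝ) (i : ℕ) : ℝ :=
  (X.sort (· ≤ ·)).getD i 0

/-- `osLe B A` means `A ≥ B` as ordered sets: for every index `i` valid in
both, the `i`-th smallest element of `A` is at least that of `B`. -/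
def osLe (B A : Multiset ℝ) : Prop :=
  ∀ i : ℕ, i < Multiset.card A → i < Multiset.card B → osIdx B i ≤ osIdx A i

private lemma sorted_getD_mono {l : List ℝ} (hl : l.Pairwise (· ≤ ·)) {j k : ℕ}
    (hjk : j ≤ k) (hk : k < l.length) : l.getD j 0 ≤ l.getD k 0 := by
  have hj : j < l.length := lt_of_le_of_lt hjk hk
  rw [List.getD_eq_getElem _ _ hj, List.getD_eq_getElem _ _ hk]
  exact hl.rel_get_of_le (a := ⟨j, hj⟩) (b := ⟨k, hk⟩) hjk

private lemma oi_le (b : ℝ) : ∀ (l : List ℝ), l.Pairwise (· ≤ ·) → ∀ i : ℕ, i < l.length →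
    (l.orderedInsert (· ≤ ·) b).getD i 0 ≤ l.getD i 0 := by
  intro l
  induction l with
  | nil => intro _ i hi; simp at hi
  | cons a t ih =>
    intro hs i hi
    rw [List.orderedInsert]
    split_ifs with hba
    · match i with
      | 0 => simpa using hba
      | (j+1) =>
        simp only [List.getD_cons_succ]
        exact sorted_getD_mono hs (Nat.le_succ j) hi
    · match i with
      | 0 => simp
      | (j+1) =>
        simp only [List.getD_cons_succ]
        exact ih hs.of_cons j (by simpa using hi)

private lemma oi_last (b : ℝ) : ∀ (l : List ℝ), l.Pairwise (· ≤ ·) → l ≠ [] →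
    b ≤ l.getD (l.length - 1) 0 →
    (l.orderedInsert (· ≤ ·) b).getD l.length 0 ≤ l.getD (l.length - 1) 0 := by
  intro l
  induction l with
  | nil => intro _ h; exact absurd rfl h
  | cons a t ih =>
    intro hs _ hb
    rw [List.orderedInsert]
    split_ifs with hba
    · simp only [List.length_cons, Nat.add_sub_cancel] at hb ⊢
      simp only [List.getD_cons_succ]
      exact le_rfl
    · rcases t with _ | ⟨c, s⟩
      · simpa using hb
      · have he : (a :: c :: s).getD ((a :: c :: s).length - 1) 0
            = (c :: s).getD ((c :: s).length - 1) 0 := by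
          simp
        rw [he] at hb ⊢
        simp only [List.length_cons, List.getD_cons_succ]
        exact ih hs.of_cons (by simp) hb

private lemma sort_cons_eq (b : ℝ) (B : Multiset ℝ) :
    (b ::ₘ B).sort (· ≤ ·) = (B.sort (· ≤ ·)).orderedInsert (· ≤ ·) b := by
  have hperm : List.Perm ((b ::ₘ B).sort (· ≤ ·)) ((B.sort (· ≤ ·)).orderedInsert (· ≤ ·) b) := by
    refine List.Perm.trans ?_ ((B.sort (· ≤ ·)).perm_orderedInsert (· ≤ ·) b).symm
    rw [← Multiset.coe_eq_coe]
    simp [Multiset.sort_eq, ← Multiset.cons_coe]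
  exact hperm.eq_of_pairwise' (Multiset.pairwise_sort _ _)
    ((Multiset.pairwise_sort B (· ≤ ·)).orderedInsert b _)

theorem ordered_insert_single (A B : Multiset ℝ) (b : ℝ)
    (hAB : osLe B A)
    (h : (B ≠ 0 ∧ b ≤ osIdx B (Multiset.card B - 1)) ∨
          Multiset.card A ≤ Multiset.card B) :
    osLe (b ::ₘ B) A := by
  intro i hiA hiB'
  have hlenB : (B.sort (· ≤ ·)).length = Multiset.card B := Multiset.length_sort _
  have hsB := Multiset.pairwise_sort B (· ≤ ·)
  have hsA := Multiset.pairwise_sort A (· ≤ ·)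
  rcases lt_or_ge i (Multiset.card B) with hi | hi
  · -- i < card B
    have h1 : osIdx (b ::ₘ B) i ≤ osIdx B i := by
      unfold osIdx
      rw [sort_cons_eq]
      exact oi_le b _ hsB i (by omega)
    exact h1.trans (hAB i hiA hi)
  · -- i = card B
    have hieq : i = Multiset.card B := by
      simp only [Multiset.card_cons] at hiB'; omega
    rcases h with ⟨hB0, hb⟩ | hcard
    · have hBpos : 0 < Multiset.card B := Multiset.card_pos.mpr hB0
      have h1 : osIdx (b ::ₘ B) i ≤ osIdx B (Multiset.card B - 1) := by
        unfold osIdx at hb ⊢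
        rw [sort_cons_eq, hieq, ← hlenB]
        exact oi_last b _ hsB (by simp [← List.length_pos_iff, hlenB, hBpos]) (by rwa [hlenB])
      have h2 : osIdx B (Multiset.card B - 1) ≤ osIdx A (Multiset.card B - 1) :=
        hAB _ (by omega) (by omega)
      have h3 : osIdx A (Multiset.card B - 1) ≤ osIdx A i := by
        unfold osIdx
        exact sorted_getD_mono hsA (by omega) (by rw [Multiset.length_sort]; omega)
      exact h1.trans (h2.trans h3)
    · omega
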